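/- There is no normal subgroup N of H with N nontrivial and N ∩ H_p ⊆ A_p for all positive integers p. -/
import Mathlib


noncomputable section

/-- Ambient group: orientation-preserving bijections (order-isomorphisms) of ℝ. -/
abbrev G₀ : Type := ℝ ≃o ℝ

/-- Dyadic rational real numbers, i.e. elements of ℤ[1/2]. -/
def DyadicR (x : ℝ) : Prop := ∃ (a : ℤ) (n : ℕ), x = (a : ℝ) / 2 ^ n

/-- `f` is piecewise linear: there is a set of breakpoints, all dyadic, with finitely many in
each compact set, off which `f` is locally affine with slope a power of `2`. -/
def IsPL (f : ℝ → ℝ) : Prop :=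
  ∃ B : Set ℝ,
    (∀ x ∈ B, DyadicR x) ∧
    (∀ K : Set ℝ, IsCompact K → (B ∩ K).Finite) ∧
    (∀ x ∉ B, ∃ (n : ℤ) (c : ℝ), ∀ᶠ y in nhds x, f y = (2 : ℝ) ^ n * y + c)

/-- The group `P₊` of orientation-preserving PL homeomorphisms of ℝ with dyadic breakpoints
and slopes powers of 2. -/
def Pplus : Set G₀ := {f : G₀ | IsPL ⇑f}

/-- `H_p`: the `p`-periodically affine elements of `P₊`. -/
def Hset (p : ℕ) : Set G₀ :=
  {f : G₀ | f ∈ Pplus ∧ ∀ t : ℝ, f (t + (p : ℝ)) = f t + (p : ℝ)}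

/-- `A_p`: translations by integer multiples of `p`. -/
def Aset (p : ℕ) : Set G₀ := {f : G₀ | ∃ k : ℤ, ∀ t : ℝ, f t = t + (k : ℝ) * (p : ℝ)}

/-- `H = ⋃_{p ≥ 1} H_p`. -/
def Hunion : Set G₀ := ⋃ p ∈ {p : ℕ | 0 < p}, Hset p

/-- there is no nontrivial normal subgroup `N` of `H` with `N ∩ H_p ⊆ A_p` for
all `p ≥ 1`. -/
theorem stmt13 (S : Subgroup G₀) (hS : (S : Set G₀) = Hunion)
    (N : Subgroup G₀) (hNS : N ≤ S)
    (hnorm : ∀ g ∈ S, ∀ n ∈ N, g * n * g⁻¹ ∈ N)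
    (hA : ∀ p : ℕ, 0 < p → (N : Set G₀) ∩ Hset p ⊆ Aset p) :
    N = ⊥ := by
  rw [eq_bot_iff]
  intro n hn
  rw [Subgroup.mem_bot]
  by_contra hne
  have hnS : n ∈ (S : Set G₀) := hNS hn
  rw [hS, Hunion] at hnS
  simp only [Set.mem_iUnion, Set.mem_setOf_eq] at hnS
  obtain ⟨p, hp, hnp⟩ := hnS
  obtain ⟨k, hk⟩ := hA p hp ⟨hn, hnp⟩
  have hk0 : k ≠ 0 := by
    rintro rfl
    exact hne (DFunLike.ext n 1 (fun t => by simp [hk t]))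
  set q : ℕ := 2 * k.natAbs * p with hq
  have hqpos : 0 < q := by positivity
  have hnq : n ∈ Hset q := by
    refine ⟨hnp.1, fun t => ?_⟩
    rw [hk, hk]; ring
  obtain ⟨j, hj⟩ := hA q hqpos ⟨hn, hnq⟩
  have h0 : (k : ℝ) * p = (j : ℝ) * q := by
    have := (hk 0).symm.trans (hj 0)
    linarith
  have hz : k * (p : ℤ) = j * (2 * k.natAbs * p) := by
    exact_mod_cast h0
  have hpz : (0 : ℤ) < (p : ℤ) := by exact_mod_cast hp
  have hkk : k = j * (2 * (k.natAbs : ℤ)) := by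
    have := mul_right_cancel₀ (ne_of_gt hpz) (by push_cast at hz ⊢; linarith : k * (p:ℤ) = (j * (2 * (k.natAbs:ℤ))) * (p:ℤ))
    exact this
  have hnat : k.natAbs = j.natAbs * (2 * k.natAbs) := by
    have := congrArg Int.natAbs hkk
    simpa [Int.natAbs_mul, Int.natAbs_abs] using this
  have hka : 0 < k.natAbs := Int.natAbs_pos.mpr hk0
  rcases Nat.eq_zero_or_pos j.natAbs with h | h
  · rw [h] at hnat; omega
  · nlinarith [hnat, hka, h]
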